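/- arXiv:1609.01832 — 3 statements merged into one kernel-verified Lean document; each statement's English description precedes it below -/
import Mathlib

section
/- Let r ≥ 2 and let R be the r×r integer matrix with first row all 1's, and for 2 ≤ i ≤ r, row i has entry r−i+1 in column i−1, entry i−1 in column i, and zeros elsewhere. Then R has rank r−1. -/
/-- The transformation matrix `R` (first row all ones; row `i ≥ 2` has entry
`r-i+1` in column `i-1` and entry `i-1` in column `i`) has rank `r-1`.
Rows and columns are indexed by `Fin r`, so `Fin`-index `i` corresponds to
the paper's index `i+1`. -/
theorem stmt_2 (r : ℕ) (hr : 2 ≤ r)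
    (R : Matrix (Fin r) (Fin r) ℚ)
    (hR : ∀ i j : Fin r, R i j =
      if i.val = 0 then 1
      else if j.val + 1 = i.val then (r : ℚ) - i.val
      else if j = i then (i.val : ℚ)
      else 0) :
    R.rank = r - 1 := by
  have h0 : (0:ℕ) < r := by omega
  -- row 0 of R.mulVec w is the sum of entries of w
  have hrow0 : ∀ w : Fin r → ℚ, R.mulVec w ⟨0, h0⟩ = ∑ j, w j := by
    intro w
    simp [Matrix.mulVec, dotProduct, hR]
  -- row k+1 of R.mulVec w
  have hrow : ∀ (w : Fin r → ℚ) (k : ℕ) (hk : k + 1 < r),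
      R.mulVec w ⟨k+1, hk⟩ =
        ((r:ℚ) - (k+1)) * w ⟨k, by omega⟩ + ((k:ℚ)+1) * w ⟨k+1, hk⟩ := by
    intro w k hk
    rw [Matrix.mulVec, dotProduct]
    rw [Finset.sum_eq_add_of_mem (⟨k, by omega⟩ : Fin r) ⟨k+1, hk⟩
      (Finset.mem_univ _) (Finset.mem_univ _) (by simp [Fin.ext_iff]) ?_]
    · rw [hR, hR]
      simp [Fin.ext_iff]
    · intro c _ hc
      rw [hR]
      have h1 : ¬ c.val + 1 = k + 1 := by
        intro h
        exact hc.1 (by apply Fin.ext; simp only [Fin.val_mk]; omega)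
      have h2 : c ≠ ⟨k+1, hk⟩ := hc.2
      simp [h1, h2]
      intro h
      exact absurd (by omega) h1
  -- the kernel vector
  set v : Fin r → ℚ := fun i => (-1)^i.val * ((r-1).choose i.val) with hv
  have hv0 : v ⟨0, h0⟩ = 1 := by simp [hv]
  have hvker : R.mulVec v = 0 := by
    funext i
    rcases i with ⟨iv, hi⟩
    rcases iv with _ | k
    · rw [hrow0]
      have hsum := Int.alternating_sum_range_choose_of_ne (n := r-1) (by omega)
      have hcast : (∑ i ∈ Finset.range r, (-1:ℚ) ^ i * ((r-1).choose i)) = 0 := by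
        have h2 : ((∑ i ∈ Finset.range (r-1+1), (-1) ^ i * ((r-1).choose i : ℤ) : ℤ) : ℚ) = 0 := by
          rw [hsum]; norm_num
        push_cast at h2
        have hr' : r - 1 + 1 = r := by omega
        rw [hr'] at h2
        exact h2
      rw [show (∑ j : Fin r, v j) =
          ∑ j ∈ Finset.range r, (-1:ℚ)^j * ((r-1).choose j) from
        Fin.sum_univ_eq_sum_range (fun j => (-1:ℚ)^j * ((r-1).choose j)) r]
      exact hcast
    · rw [hrow v k hi]
      have hk1 : k ≤ r - 1 := by omega
      have hc := Nat.choose_succ_right_eq (r-1) k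
      have hcq : ((r-1).choose (k+1) : ℚ) * (k+1) = ((r-1).choose k : ℚ) * ((r:ℚ) - 1 - k) := by
        have : ((r-1).choose (k+1) * (k+1) : ℕ) = ((r-1).choose k * (r - 1 - k) : ℕ) := hc
        have h2 : (((r-1).choose k * (r - 1 - k) : ℕ) : ℚ) = ((r-1).choose k : ℚ) * ((r:ℚ) - 1 - k) := by
          push_cast [Nat.cast_sub hk1, Nat.cast_sub (by omega : 1 ≤ r)]
          ring
        calc ((r-1).choose (k+1) : ℚ) * (k+1)
            = (((r-1).choose (k+1) * (k+1) : ℕ) : ℚ) := by push_cast; ring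
          _ = _ := by rw [this, h2]
      show ((r:ℚ) - (k+1)) * ((-1)^k * ((r-1).choose k : ℚ))
          + ((k:ℚ)+1) * ((-1)^(k+1) * ((r-1).choose (k+1) : ℚ)) = (0 : Fin r → ℚ) ⟨k+1, hi⟩
      simp only [Pi.zero_apply]
      linear_combination (-(-1:ℚ)^k) * hcq
  -- any kernel element vanishing at 0 is zero
  have huniq : ∀ w : Fin r → ℚ, R.mulVec w = 0 → w ⟨0, h0⟩ = 0 → w = 0 := by
    intro w hw hw0
    have key : ∀ k (hk : k < r), w ⟨k, hk⟩ = 0 := by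
      intro k
      induction k with
      | zero => intro hk; exact hw0
      | succ k ih =>
        intro hk
        have h1 : R.mulVec w ⟨k+1, hk⟩ = 0 := by rw [hw]; rfl
        rw [hrow w k hk, ih (by omega)] at h1
        have h2 : ((k:ℚ)+1) * w ⟨k+1, hk⟩ = 0 := by linarith
        have h3 : ((k:ℚ)+1) ≠ 0 := by positivity
        exact (mul_eq_zero.mp h2).resolve_left h3
    funext i
    exact key i.val i.isLt
  -- the kernel has dimension 1
  have hker1 : Module.finrank ℚ (LinearMap.ker R.mulVecLin) = 1 := by
    have hle : Module.finrank ℚ (LinearMap.ker R.mulVecLin) ≤ 1 := by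
      have hinj : Function.Injective
          ((LinearMap.proj (⟨0, h0⟩ : Fin r) : (Fin r → ℚ) →ₗ[ℚ] ℚ).comp
            (LinearMap.ker R.mulVecLin).subtype) := by
        rw [← LinearMap.ker_eq_bot]
        rw [Submodule.eq_bot_iff]
        rintro ⟨w, hw⟩ hw0
        rw [LinearMap.mem_ker] at hw
        rw [Matrix.mulVecLin_apply] at hw
        exact Subtype.ext (huniq w hw hw0)
      have := LinearMap.finrank_le_finrank_of_injective hinj
      simpa using this
    have hge : 1 ≤ Module.finrank ℚ (LinearMap.ker R.mulVecLin) := by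
      have hvmem : v ∈ LinearMap.ker R.mulVecLin := by
        rw [LinearMap.mem_ker, Matrix.mulVecLin_apply, hvker]
      have hvne : (⟨v, hvmem⟩ : LinearMap.ker R.mulVecLin) ≠ 0 := by
        intro h
        have hveq : v = 0 := congrArg Subtype.val h
        rw [hveq] at hv0
        simp at hv0
      have : 0 < Module.finrank ℚ (LinearMap.ker R.mulVecLin) :=
        Module.finrank_pos_iff_exists_ne_zero.mpr ⟨_, hvne⟩
      omega
    omega
  -- rank-nullity
  have hrn := LinearMap.finrank_range_add_finrank_ker R.mulVecLin
  rw [hker1] at hrn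
  have hdim : Module.finrank ℚ (Fin r → ℚ) = r := by simp
  rw [hdim] at hrn
  rw [Matrix.rank]
  omega
end

section
/- Let r, s ≥ 2. Define the linear maps on r×s rational matrices: (R_α C)^{1j} = Σ_{i=1}^r C^{ij}, (R_α C)^{ij} = (i−1)C^{ij} + (r−i+1)C^{(i−1)j} for i ≥ 2; and (S_β C)^{i1} = Σ_{j=1}^s C^{ij}, (S_β C)^{ij} = (j−1)C^{ij} + (s−j+1)C^{i(j−1)} for j ≥ 2. Then the space of matrices C with R_α C = 0 and S_β C = 0 is one-dimensional, spanned by C^{ij} = (−1)^{i+j} C(r−1, i−1) C(s−1, j−1). -/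
-- binomial identity in ℚ: C(r-1, m+1) * (m+1) = C(r-1, m) * (r - (m+1)), for m+2 ≤ r
lemma binom_id (r m : ℕ) (h : m + 2 ≤ r) :
    (((r-1).choose (m+1) : ℚ)) * ((m:ℚ)+1) = ((r-1).choose m) * ((r:ℚ) - (m+1)) := by
  have h1 := Nat.choose_succ_right_eq (r-1) m
  have h2 : r - 1 - m = r - (m+1) := by omega
  rw [h2] at h1
  have h3 : ((r - (m+1) : ℕ) : ℚ) = (r:ℚ) - (m+1) := by
    rw [Nat.cast_sub (by omega)]; push_cast; ring
  calc (((r-1).choose (m+1) : ℚ)) * ((m:ℚ)+1)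
      = (((r-1).choose (m+1) * (m+1) : ℕ) : ℚ) := by push_cast; ring
    _ = (((r-1).choose m * (r - (m+1)) : ℕ) : ℚ) := by rw [h1]
    _ = ((r-1).choose m) * ((r:ℚ) - (m+1)) := by push_cast [h3]; ring

-- solution of the recurrence
lemma rec_sol (r : ℕ) (f : ℕ → ℚ)
    (h : ∀ i, 2 ≤ i → i ≤ r → ((i:ℚ)-1) * f i + ((r:ℚ)-i+1) * f (i-1) = 0) :
    ∀ i, 1 ≤ i → i ≤ r → f i = f 1 * (-1)^(i-1) * ((r-1).choose (i-1)) := by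
  intro i
  induction i with
  | zero => omega
  | succ k ih =>
    rcases k with _ | m
    · intro _ _; simp
    · intro _ hle
      have hm : ((m:ℚ) + 1) ≠ 0 := by positivity
      have hrec := h (m+2) (by omega) hle
      have hfk := ih (by omega) (by omega)
      have e1 : m + 2 - 1 = m + 1 := rfl
      rw [e1] at hrec
      simp only [Nat.add_sub_cancel] at hfk ⊢
      rw [hfk] at hrec
      have hid := binom_id r m hle
      have key : ((m:ℚ)+1) * f (m+2) =
          ((m:ℚ)+1) * (f 1 * (-1)^(m+1) * ((r-1).choose (m+1))) := by
        push_cast at hrec ⊢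
        linear_combination hrec + f 1 * (-1)^m * hid
      exact mul_left_cancel₀ hm key

lemma alt_sum (r : ℕ) (hr : 2 ≤ r) :
    ∑ i ∈ Finset.Icc 1 r, (-1:ℚ)^i * ((r-1).choose (i-1)) = 0 := by
  rw [← Finset.Ico_add_one_right_eq_Icc, Finset.sum_Ico_eq_sum_range]
  have h := Int.alternating_sum_range_choose (n := r - 1)
  rw [if_neg (by omega)] at h
  have h2 : r - 1 + 1 = r := by omega
  rw [h2] at h
  have : ∑ k ∈ Finset.range r, (-1:ℚ)^(1+k) * ((r-1).choose (1+k-1)) =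
      - ∑ k ∈ Finset.range r, (-1:ℚ)^k * ((r-1).choose k) := by
    rw [← Finset.sum_neg_distrib]
    apply Finset.sum_congr rfl
    intro k _
    simp only [Nat.add_sub_cancel_left]
    ring
  rw [show r + 1 - 1 = r by omega, this]
  have : ∑ k ∈ Finset.range r, (-1:ℚ)^k * ((r-1).choose k) = 0 := by
    exact_mod_cast h
  rw [this]; ring

/-- The joint kernel of the row transformation `R_α` and the column
transformation `S_β` on `r×s` rational matrices is one-dimensional, spanned by
`C^{ij} = (-1)^{i+j} C(r-1,i-1) C(s-1,j-1)`.  Matrices are `1`-indexed. -/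
theorem stmt_5 (r s : ℕ) (hr : 2 ≤ r) (hs : 2 ≤ s) (C : ℕ → ℕ → ℚ) :
    ((∀ j : ℕ, 1 ≤ j → j ≤ s → ∑ i ∈ Finset.Icc 1 r, C i j = 0) ∧
      (∀ i j : ℕ, 2 ≤ i → i ≤ r → 1 ≤ j → j ≤ s →
        ((i : ℚ) - 1) * C i j + ((r : ℚ) - i + 1) * C (i - 1) j = 0) ∧
      (∀ i : ℕ, 1 ≤ i → i ≤ r → ∑ j ∈ Finset.Icc 1 s, C i j = 0) ∧
      (∀ i j : ℕ, 1 ≤ i → i ≤ r → 2 ≤ j → j ≤ s →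
        ((j : ℚ) - 1) * C i j + ((s : ℚ) - j + 1) * C i (j - 1) = 0)) ↔
    (∃ n : ℚ, ∀ i j : ℕ, 1 ≤ i → i ≤ r → 1 ≤ j → j ≤ s →
      C i j = n * (-1 : ℚ) ^ (i + j) * ((r - 1).choose (i - 1)) *
        ((s - 1).choose (j - 1))) := by
  constructor
  · rintro ⟨h1, h2, h3, h4⟩
    refine ⟨C 1 1, fun i j hi1 hir hj1 hjs => ?_⟩
    have hrow : C i j = C 1 j * (-1)^(i-1) * ((r-1).choose (i-1)) :=
      rec_sol r (fun i => C i j) (fun i h2i hile => h2 i j h2i hile hj1 hjs) i hi1 hir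
    have hcol : C 1 j = C 1 1 * (-1)^(j-1) * ((s-1).choose (j-1)) :=
      rec_sol s (fun j => C 1 j) (fun j h2j hjle => h4 1 j le_rfl (by omega) h2j hjle) j hj1 hjs
    obtain ⟨a, rfl⟩ : ∃ a, i = a + 1 := ⟨i - 1, by omega⟩
    obtain ⟨b, rfl⟩ : ∃ b, j = b + 1 := ⟨j - 1, by omega⟩
    simp only [Nat.add_sub_cancel] at hrow hcol ⊢
    rw [hrow, hcol]
    ring
  · rintro ⟨n, hC⟩
    refine ⟨fun j hj1 hjs => ?_, fun i j h2i hir hj1 hjs => ?_,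
      fun i hi1 hir => ?_, fun i j hi1 hir h2j hjs => ?_⟩
    · calc ∑ i ∈ Finset.Icc 1 r, C i j
          = ∑ i ∈ Finset.Icc 1 r,
            (n * (-1)^j * ((s-1).choose (j-1))) * ((-1:ℚ)^i * ((r-1).choose (i-1))) := by
            refine Finset.sum_congr rfl fun i hi => ?_
            rw [Finset.mem_Icc] at hi
            rw [hC i j hi.1 hi.2 hj1 hjs, pow_add]
            ring
        _ = (n * (-1)^j * ((s-1).choose (j-1))) *
            ∑ i ∈ Finset.Icc 1 r, (-1:ℚ)^i * ((r-1).choose (i-1)) := by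
            rw [Finset.mul_sum]
        _ = 0 := by rw [alt_sum r hr]; ring
    · obtain ⟨m, rfl⟩ : ∃ m, i = m + 2 := ⟨i - 2, by omega⟩
      have e1 : m + 2 - 1 = m + 1 := rfl
      rw [e1, hC (m+2) j (by omega) hir hj1 hjs, hC (m+1) j (by omega) (by omega) hj1 hjs]
      have hid := binom_id r m hir
      simp only [Nat.add_sub_cancel]
      push_cast
      linear_combination (n * (-1:ℚ)^(m+j) * ((s-1).choose (j-1))) * hid
    · calc ∑ j ∈ Finset.Icc 1 s, C i j
          = ∑ j ∈ Finset.Icc 1 s,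
            (n * (-1)^i * ((r-1).choose (i-1))) * ((-1:ℚ)^j * ((s-1).choose (j-1))) := by
            refine Finset.sum_congr rfl fun j hj => ?_
            rw [Finset.mem_Icc] at hj
            rw [hC i j hi1 hir hj.1 hj.2, pow_add]
            ring
        _ = (n * (-1)^i * ((r-1).choose (i-1))) *
            ∑ j ∈ Finset.Icc 1 s, (-1:ℚ)^j * ((s-1).choose (j-1)) := by
            rw [Finset.mul_sum]
        _ = 0 := by rw [alt_sum s hs]; ring
    · obtain ⟨m, rfl⟩ : ∃ m, j = m + 2 := ⟨j - 2, by omega⟩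
      have e1 : m + 2 - 1 = m + 1 := rfl
      rw [e1, hC i (m+2) hi1 hir (by omega) hjs, hC i (m+1) hi1 hir (by omega) (by omega)]
      have hid := binom_id s m hjs
      simp only [Nat.add_sub_cancel]
      push_cast
      linear_combination (n * (-1:ℚ)^(i+m) * ((r-1).choose (i-1))) * hid
end

section
/- Uniqueness of the BCJ coefficient matrix: let r = s+1 ≥ 3 and suppose an r×s rational matrix C satisfies the inhomogeneous system R_α C = D_α^{(1)} (rows 2..r only, first row unconstrained), C S_β = D_β^{(1)} (columns 2..s only, first column unconstrained), Σ_i C^{ij} = (D_α^{(1)})^{1j}, Σ_j C^{ij} = (D_β^{(1)})^{i1}, together with the extra condition C^{r1} = 0. Then C^{ij} = [i ≤ j]. -/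
/-- The matrix `D_α^{(1)}(r,s)` of the paper (`1`-indexed). -/
def Dalpha (r : ℕ) (i j : ℕ) : ℤ :=
  if i = 1 then (j : ℤ)
  else if i ≤ j then (r : ℤ)
  else if j + 1 = i then (r : ℤ) - i + 1
  else 0

/-- The matrix `D_β^{(1)}(r,s)` of the paper (`1`-indexed). -/
def Dbeta (r s : ℕ) (i j : ℕ) : ℤ :=
  if i = 1 then (s : ℤ)
  else if i = r then 0
  else if j = 1 then (s : ℤ) - i + 1
  else if j = i then (i : ℤ) - 1
  else if i < j then (s : ℤ)
  else 0

/-- Uniqueness of the BCJ coefficient matrix for `r = s+1 ≥ 3`: any rational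
`r×s` matrix `C` satisfying the row recursion with right-hand side
`D_α^{(1)}`, the column recursion with right-hand side `D_β^{(1)}`, the two
boundary sum conditions, and `C^{r1} = 0`, equals `C^{ij} = [i ≤ j]`. -/
theorem stmt_18 (r s : ℕ) (hs : 2 ≤ s) (hrs : r = s + 1)
    (C : ℕ → ℕ → ℚ)
    (hrow : ∀ i j : ℕ, 2 ≤ i → i ≤ r → 1 ≤ j → j ≤ s →
      ((i : ℚ) - 1) * C i j + ((r : ℚ) - i + 1) * C (i - 1) j = (Dalpha r i j : ℚ))
    (hcol : ∀ i j : ℕ, 1 ≤ i → i ≤ r → 2 ≤ j → j ≤ s →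
      ((j : ℚ) - 1) * C i j + ((s : ℚ) - j + 1) * C i (j - 1) = (Dbeta r s i j : ℚ))
    (hrowsum : ∀ j : ℕ, 1 ≤ j → j ≤ s →
      ∑ i ∈ Finset.Icc 1 r, C i j = (Dalpha r 1 j : ℚ))
    (hcolsum : ∀ i : ℕ, 1 ≤ i → i ≤ r →
      ∑ j ∈ Finset.Icc 1 s, C i j = (Dbeta r s i 1 : ℚ))
    (hr1 : C r 1 = 0) :
    ∀ i j : ℕ, 1 ≤ i → i ≤ r → 1 ≤ j → j ≤ s →
      C i j = if i ≤ j then 1 else 0 := by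
  have hrs' : 3 ≤ r := by omega
  -- Column 1 by downward induction from row r
  have hcol1 : ∀ d i : ℕ, i + d = r → 1 ≤ i → C i 1 = if i ≤ 1 then 1 else 0 := by
    intro d
    induction d with
    | zero =>
      intro i hi _
      have hir : i = r := by omega
      rw [hir, hr1, if_neg (by omega : ¬ r ≤ 1)]
    | succ d ih =>
      intro i hi h1
      have heq := hrow (i + 1) 1 (by omega) (by omega) le_rfl (by omega)
      have hC : C (i + 1) 1 = 0 := by
        have := ih (i + 1) (by omega) (by omega)
        simpa [show ¬ i + 1 ≤ 1 by omega] using this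
      simp only [Nat.add_sub_cancel, hC] at heq
      rcases Nat.lt_or_ge i 2 with h2 | h2
      · -- i = 1
        have hieq : i = 1 := by omega
        subst hieq
        have hD : (Dalpha r (1 + 1) 1 : ℚ) = (r : ℚ) - 2 + 1 := by
          simp only [Dalpha, show ¬ (1 + 1 = 1) by omega, if_neg, not_false_iff,
            show ¬ (1 + 1 ≤ 1) by omega, if_pos, show 1 + 1 = 1 + 1 from rfl]
          push_cast; ring
        rw [hD] at heq
        rw [if_pos le_rfl]
        have hcoef2 : ((r : ℚ) - 2 + 1) ≠ 0 := by
          have h3 : (3 : ℚ) ≤ (r : ℚ) := by exact_mod_cast hrs'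
          intro h; nlinarith
        have h2' : ((r : ℚ) - 2 + 1) * C 1 1 = ((r : ℚ) - 2 + 1) * 1 := by
          push_cast at heq ⊢; linarith
        exact mul_left_cancel₀ hcoef2 h2'
      · -- i ≥ 2
        have hD : (Dalpha r (i + 1) 1 : ℚ) = 0 := by
          simp [Dalpha, show i + 1 ≠ 1 by omega, show ¬ i + 1 ≤ 1 by omega,
            show ¬ (1 + 1 = i + 1) by omega, show i ≠ 0 by omega]
        rw [hD] at heq
        rw [if_neg (by omega : ¬ i ≤ 1)]
        have hcoef : ((r : ℚ) - (↑(i + 1) : ℚ) + 1) ≠ 0 := by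
          have hle : (i : ℚ) + 1 ≤ (r : ℚ) := by exact_mod_cast (by omega : i + 1 ≤ r)
          push_cast
          intro h; nlinarith
        have hz : ((r : ℚ) - (↑(i + 1) : ℚ) + 1) * C i 1 = 0 := by linarith [heq]
        rcases mul_eq_zero.mp hz with h | h
        · exact absurd h hcoef
        · exact h
  -- Main induction on columns
  have main : ∀ j, 1 ≤ j → j ≤ s → ∀ i, 1 ≤ i → i ≤ r → C i j = if i ≤ j then 1 else 0 := by
    intro j hj
    induction j, hj using Nat.le_induction with
    | base =>
      intro _ i h1 hir
      exact hcol1 (r - i) i (by omega) h1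
    | succ j hj ih =>
      intro hjs i h1 hir
      have hprev := ih (by omega) i h1 hir
      have heq := hcol i (j + 1) h1 hir (by omega) hjs
      simp only [Nat.add_sub_cancel, hprev] at heq
      set v : ℚ := if i ≤ j + 1 then (1:ℚ) else 0 with hv
      have hkey : ((↑(j + 1) : ℚ) - 1) * v + ((s : ℚ) - (↑(j + 1) : ℚ) + 1) * (if i ≤ j then (1:ℚ) else 0) = (Dbeta r s i (j + 1) : ℚ) := by
        rcases Nat.lt_or_ge i 2 with hi1 | hi2
        · have hieq : i = 1 := by omega
          subst hieq
          rw [hv, if_pos (by omega : 1 ≤ j + 1), if_pos hj]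
          rw [show (Dbeta r s 1 (j + 1) : ℚ) = (s : ℚ) by simp [Dbeta]]
          push_cast; ring
        · rcases Nat.eq_or_lt_of_le hir with hieq | hilt
          · -- i = r : all zero
            rw [hv, if_neg (by omega : ¬ i ≤ j + 1), if_neg (by omega : ¬ i ≤ j)]
            rw [show (Dbeta r s i (j + 1) : ℚ) = 0 by
              simp [Dbeta, show i ≠ 1 by omega, hieq, show r ≠ 1 by omega]]
            ring
          · -- 2 ≤ i ≤ r - 1
            have hine1 : i ≠ 1 := by omega
            have hiner : i ≠ r := by omega
            rcases Nat.lt_trichotomy i (j + 1) with hlt | heq2 | hgt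
            · -- i ≤ j
              rw [hv, if_pos (by omega : i ≤ j + 1), if_pos (by omega : i ≤ j)]
              rw [show (Dbeta r s i (j + 1) : ℚ) = (s : ℚ) by
                simp [Dbeta, hine1, hiner, show j + 1 ≠ 1 by omega,
                  show j + 1 ≠ i by omega, hlt, show j ≠ 0 by omega]]
              push_cast; ring
            · -- i = j + 1
              rw [hv, if_pos (by omega : i ≤ j + 1), if_neg (by omega : ¬ i ≤ j)]
              rw [show (Dbeta r s i (j + 1) : ℚ) = (↑(j + 1) : ℚ) - 1 by
                simp [Dbeta, hine1, hiner, show j + 1 ≠ 1 by omega, heq2.symm]]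
              push_cast; ring
            · -- i > j + 1
              rw [hv, if_neg (by omega : ¬ i ≤ j + 1), if_neg (by omega : ¬ i ≤ j)]
              rw [show (Dbeta r s i (j + 1) : ℚ) = 0 by
                simp [Dbeta, hine1, hiner, show j + 1 ≠ 1 by omega,
                  show j + 1 ≠ i by omega, show ¬ i < j + 1 by omega, show j ≠ 0 by omega]]
              ring
      have hcoef : ((↑(j + 1) : ℚ) - 1) ≠ 0 := by
        have h1' : (1 : ℚ) ≤ (j : ℚ) := by exact_mod_cast hj
        push_cast
        intro h; nlinarith
      have hfin : ((↑(j + 1) : ℚ) - 1) * C i (j + 1) = ((↑(j + 1) : ℚ) - 1) * v := by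
        linarith [heq, hkey]
      exact mul_left_cancel₀ hcoef hfin
  intro i j h1 hir h2 hjs
  exact main j h2 hjs i h1 hir
end
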